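/- The transformation (x,y) ↦ (x₁,y₁) = (1/x, -x(xy+zw+α₁)), (z,w) ↦ (z₁,w₁) = (z/x, xw) is symplectic in the sense that dx∧dy + dz∧dw = dx₁∧dy₁ + dz₁∧dw₁ on the open set x ≠ 0. -/

import Mathlib

/-- Directional derivative of a function on ℂ⁴. -/
noncomputable def Dv (f : ℂ × ℂ × ℂ × ℂ → ℂ) (p v : ℂ × ℂ × ℂ × ℂ) : ℂ :=
  fderiv ℂ f p v

/-- The standard symplectic form dx∧dy + dz∧dw evaluated on tangent vectors u, v. -/
def omega (u v : ℂ × ℂ × ℂ × ℂ) : ℂ :=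
  (u.1 * v.2.1 - v.1 * u.2.1) + (u.2.2.1 * v.2.2.2 - v.2.2.1 * u.2.2.2)

/-- Pullback of dx∧dy + dz∧dw under (X,Y,Z,W), evaluated at p on u, v. -/
noncomputable def pullback (X Y Z W : ℂ × ℂ × ℂ × ℂ → ℂ) (p u v : ℂ × ℂ × ℂ × ℂ) : ℂ :=
  (Dv X p u * Dv Y p v - Dv X p v * Dv Y p u)
    + (Dv Z p u * Dv W p v - Dv Z p v * Dv W p u)

/-- The map (x,y,z,w) ↦ (1/x, -x(xy+zw+α₁), z/x, xw) is symplectic for x ≠ 0. -/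
theorem symplectic_coord1 (α₁ : ℂ) (p : ℂ × ℂ × ℂ × ℂ) (hx : p.1 ≠ 0) :
    ∀ u v : ℂ × ℂ × ℂ × ℂ,
      pullback (fun q => 1 / q.1)
        (fun q => -q.1 * (q.1 * q.2.1 + q.2.2.1 * q.2.2.2 + α₁))
        (fun q => q.2.2.1 / q.1)
        (fun q => q.1 * q.2.2.2) p u v = omega u v := by
  have hid := hasFDerivAt_id (𝕜 := ℂ) p
  have hX : HasFDerivAt (fun q : ℂ × ℂ × ℂ × ℂ => q.1) _ p := hid.fst
  have hY : HasFDerivAt (fun q : ℂ × ℂ × ℂ × ℂ => q.2.1) _ p := hid.snd.fst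
  have hZ : HasFDerivAt (fun q : ℂ × ℂ × ℂ × ℂ => q.2.2.1) _ p := hid.snd.snd.fst
  have hW : HasFDerivAt (fun q : ℂ × ℂ × ℂ × ℂ => q.2.2.2) _ p := hid.snd.snd.snd
  have hI := HasFDerivAt.comp (𝕜 := ℂ) p (hasDerivAt_inv hx).hasFDerivAt hX
  have hZI : HasFDerivAt (fun q : ℂ × ℂ × ℂ × ℂ => q.2.2.1 * ((fun y : ℂ => y⁻¹) ∘ Prod.fst) q) _ p := hZ.mul hI
  have hYf : HasFDerivAt (fun q : ℂ × ℂ × ℂ × ℂ => -q.1 * (q.1 * q.2.1 + q.2.2.1 * q.2.2.2 + α₁)) _ p :=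
    hX.neg.mul (((hX.mul hY).add (hZ.mul hW)).add_const α₁)
  have hWf : HasFDerivAt (fun q : ℂ × ℂ × ℂ × ℂ => q.1 * q.2.2.2) _ p := hX.mul hW
  have eX : ∀ v : ℂ × ℂ × ℂ × ℂ, Dv (fun q : ℂ × ℂ × ℂ × ℂ => 1 / q.1) p v = -v.1 / p.1 ^ 2 := by
    intro v
    unfold Dv
    rw [show (fun q : ℂ × ℂ × ℂ × ℂ => 1 / q.1) = ((fun y : ℂ => y⁻¹) ∘ Prod.fst) from
      funext fun q => one_div q.1, hI.fderiv]
    simp; ring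
  have eY : ∀ v : ℂ × ℂ × ℂ × ℂ,
      Dv (fun q : ℂ × ℂ × ℂ × ℂ => -q.1 * (q.1 * q.2.1 + q.2.2.1 * q.2.2.2 + α₁)) p v
      = -(v.1 * (p.1 * p.2.1 + p.2.2.1 * p.2.2.2 + α₁))
        - p.1 * (v.1 * p.2.1 + p.1 * v.2.1 + v.2.2.1 * p.2.2.2 + p.2.2.1 * v.2.2.2) := by
    intro v
    unfold Dv; rw [hYf.fderiv]; simp; ring
  have eZ : ∀ v : ℂ × ℂ × ℂ × ℂ, Dv (fun q : ℂ × ℂ × ℂ × ℂ => q.2.2.1 / q.1) p v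
      = v.2.2.1 / p.1 - p.2.2.1 * v.1 / p.1 ^ 2 := by
    intro v
    unfold Dv
    rw [show (fun q : ℂ × ℂ × ℂ × ℂ => q.2.2.1 / q.1)
        = (fun q : ℂ × ℂ × ℂ × ℂ => q.2.2.1 * ((fun y : ℂ => y⁻¹) ∘ Prod.fst) q) from
      funext fun q => div_eq_mul_inv _ _, hZI.fderiv]
    simp; ring
  have eW : ∀ v : ℂ × ℂ × ℂ × ℂ,
      Dv (fun q : ℂ × ℂ × ℂ × ℂ => q.1 * q.2.2.2) p v = v.1 * p.2.2.2 + p.1 * v.2.2.2 := by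
    intro v
    unfold Dv; rw [hWf.fderiv]; simp; ring
  intro u v
  unfold pullback omega
  rw [eX u, eX v, eY u, eY v, eZ u, eZ v, eW u, eW v]
  field_simp
  ring
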